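/- If G and H are connected simple graphs, then the locating chromatic number of their Cartesian product satisfies χ_L(G □ H) ≤ χ_L(G) · χ_L(H). -/

import Mathlib

open SimpleGraph

/-- The distance from a vertex to a set of vertices. -/
noncomputable def setDist {V : Type*} (G : SimpleGraph V) (v : V) (S : Set V) : ℕ :=
  sInf (G.dist v '' S)

/-- The color code of a vertex with respect to a `k`-coloring `c`:
the tuple of distances to the color classes. -/
noncomputable def colorCode {V : Type*} (G : SimpleGraph V) {k : ℕ} (c : V → Fin k)
    (v : V) : Fin k → ℕ :=
  fun i => setDist G v (c ⁻¹' {i})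

/-- `c` is a locating `k`-coloring of `G`: a proper coloring onto the `k` colors
such that distinct vertices have distinct color codes. -/
def IsLocatingColoring {V : Type*} (G : SimpleGraph V) {k : ℕ} (c : V → Fin k) : Prop :=
  Function.Surjective c ∧
  (∀ u v : V, G.Adj u v → c u ≠ c v) ∧
  Function.Injective (colorCode G c)

/-- The locating chromatic number: the least `k` admitting a locating `k`-coloring. -/
noncomputable def locatingChromaticNumber {V : Type*} (G : SimpleGraph V) : ℕ :=
  sInf {k : ℕ | ∃ c : V → Fin k, IsLocatingColoring G c}

/-- A vertex is colorful w.r.t. a coloring `c` if every color appears in its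
closed neighborhood. -/
def IsColorful {V : Type*} (G : SimpleGraph V) {k : ℕ} (c : V → Fin k) (v : V) : Prop :=
  ∀ i : Fin k, ∃ u : V, (u = v ∨ G.Adj v u) ∧ c u = i

lemma walk_len_ge {V W : Type*} {G : SimpleGraph V} {H : SimpleGraph W}
    (hG : G.Connected) (hH : H.Connected) :
    ∀ {p q : V × W} (w : (G □ H).Walk p q),
      G.dist p.1 q.1 + H.dist p.2 q.2 ≤ w.length := by
  intro p q w
  induction w with
  | nil => simp
  | @cons u x q h w ih =>
    rw [Walk.length_cons]
    rw [boxProd_adj] at h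
    rcases h with ⟨h1, h2⟩ | ⟨h1, h2⟩
    · have t := hG.dist_triangle (u := u.1) (v := x.1) (w := q.1)
      have : G.dist u.1 x.1 = 1 := dist_eq_one_iff_adj.mpr h1
      rw [h2]
      omega
    · have t := hH.dist_triangle (u := u.2) (v := x.2) (w := q.2)
      have : H.dist u.2 x.2 = 1 := dist_eq_one_iff_adj.mpr h1
      rw [h2]
      omega
lemma boxProd_dist {V W : Type*} {G : SimpleGraph V} {H : SimpleGraph W}
    (hG : G.Connected) (hH : H.Connected) (a a' : V) (b b' : W) :
    (G □ H).dist (a, b) (a', b') = G.dist a a' + H.dist b b' := by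
  apply le_antisymm
  · obtain ⟨wG, hwG⟩ := hG.exists_walk_length_eq_dist a a'
    obtain ⟨wH, hwH⟩ := hH.exists_walk_length_eq_dist b b'
    have := dist_le ((wG.boxProdLeft H b).append (wH.boxProdRight G a'))
    rwa [Walk.length_append, show (wG.boxProdLeft H b).length = wG.length from Walk.length_map _ _,
      show (wH.boxProdRight G a').length = wH.length from Walk.length_map _ _, hwG, hwH] at this
  · obtain ⟨w, hw⟩ := (hG.boxProd hH).exists_walk_length_eq_dist (a, b) (a', b')
    have := walk_len_ge hG hH w
    rw [hw] at this
    exact this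
lemma setDist_le {V : Type*} {G : SimpleGraph V} {v x : V} {S : Set V} (hx : x ∈ S) :
    setDist G v S ≤ G.dist v x :=
  Nat.sInf_le ⟨x, hx, rfl⟩
lemma setDist_exists {V : Type*} {G : SimpleGraph V} {v : V} {S : Set V} (hS : S.Nonempty) :
    ∃ x ∈ S, setDist G v S = G.dist v x := by
  have : (G.dist v '' S).Nonempty := hS.image _
  have h := Nat.sInf_mem this
  obtain ⟨x, hx, hxd⟩ := h
  exact ⟨x, hx, hxd.symm⟩
lemma setDist_prod {V W : Type*} {G : SimpleGraph V} {H : SimpleGraph W}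
    (hG : G.Connected) (hH : H.Connected) (v : V) (w : W)
    {A : Set V} {B : Set W} (hA : A.Nonempty) (hB : B.Nonempty) :
    setDist (G □ H) (v, w) (A ×ˢ B) = setDist G v A + setDist H w B := by
  apply le_antisymm
  · obtain ⟨a, ha, hda⟩ := setDist_exists (G := G) (v := v) hA
    obtain ⟨b, hb, hdb⟩ := setDist_exists (G := H) (v := w) hB
    have := setDist_le (G := G □ H) (v := (v, w)) (x := (a, b)) (Set.mk_mem_prod ha hb)
    rwa [boxProd_dist hG hH, ← hda, ← hdb] at this
  · obtain ⟨x, hx, hdx⟩ := setDist_exists (G := G □ H) (v := (v, w)) (hA.prod hB)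
    rw [hdx]
    obtain ⟨x1, x2⟩ := x
    rw [boxProd_dist hG hH]
    exact Nat.add_le_add (setDist_le hx.1) (setDist_le hx.2)
lemma colorCode_self {V : Type*} {G : SimpleGraph V} {k : ℕ} (c : V → Fin k) (v : V) :
    colorCode G c v (c v) = 0 := by
  have : setDist G v (c ⁻¹' {c v}) ≤ G.dist v v := setDist_le rfl
  simpa [colorCode, dist_self] using this
lemma exists_locating {V : Type*} [Fintype V] (G : SimpleGraph V) (hG : G.Connected) :
    ∃ c : V → Fin (Fintype.card V), IsLocatingColoring G c := by
  have : Nonempty V := hG.nonempty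
  obtain ⟨e⟩ : Nonempty (V ≃ Fin (Fintype.card V)) := ⟨Fintype.equivFin V⟩
  refine ⟨e, e.surjective, fun u v h hc => (G.ne_of_adj h) (e.injective hc), ?_⟩
  intro u v huv
  have h := congrFun huv (e u)
  rw [colorCode_self] at h
  have hpre : (⇑e) ⁻¹' {e u} = {u} := by
    ext x; simp [Equiv.eq_symm_apply, eq_comm]
  have : setDist G v {u} = 0 := by
    rw [colorCode, hpre] at h; exact h.symm
  have : G.dist v u = 0 := by
    simpa [setDist, Set.image_singleton] using this
  exact ((hG.dist_eq_zero_iff).mp this).symm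

/-- For connected graphs `G` and `H`,
`χ_L(G □ H) ≤ χ_L(G) * χ_L(H)`. -/
theorem stmt2 {V W : Type*} [Fintype V] [Fintype W]
    (G : SimpleGraph V) (H : SimpleGraph W)
    (hG : G.Connected) (hH : H.Connected) :
    locatingChromaticNumber (G □ H) ≤
      locatingChromaticNumber G * locatingChromaticNumber H := by
  have hne1 : {k : ℕ | ∃ c : V → Fin k, IsLocatingColoring G c}.Nonempty :=
    ⟨_, exists_locating G hG⟩
  have hne2 : {k : ℕ | ∃ c : W → Fin k, IsLocatingColoring H c}.Nonempty :=
    ⟨_, exists_locating H hH⟩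
  obtain ⟨cG, hcG⟩ := Nat.sInf_mem hne1
  obtain ⟨cH, hcH⟩ := Nat.sInf_mem hne2
  set m := locatingChromaticNumber G
  set n := locatingChromaticNumber H
  apply Nat.sInf_le
  -- build the product coloring
  set E : Fin m × Fin n ≃ Fin (m * n) := finProdFinEquiv
  refine ⟨fun x => E (cG x.1, cH x.2), ?_, ?_, ?_⟩
  · intro k
    obtain ⟨a, ha⟩ := hcG.1 (E.symm k).1
    obtain ⟨b, hb⟩ := hcH.1 (E.symm k).2
    exact ⟨(a, b), by simp [ha, hb]⟩
  · rintro ⟨u1, u2⟩ ⟨v1, v2⟩ h hc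
    have hc' : cG u1 = cG v1 ∧ cH u2 = cH v2 := by
      have := E.injective hc
      exact ⟨congrArg Prod.fst this, congrArg Prod.snd this⟩
    rw [boxProd_adj] at h
    rcases h with ⟨h1, _⟩ | ⟨h1, _⟩
    · exact hcG.2.1 _ _ h1 hc'.1
    · exact hcH.2.1 _ _ h1 hc'.2
  · -- injectivity of color codes
    have hpre : ∀ (i : Fin m) (j : Fin n),
        (fun x : V × W => E (cG x.1, cH x.2)) ⁻¹' {E (i, j)}
          = (cG ⁻¹' {i}) ×ˢ (cH ⁻¹' {j}) := by
      intro i j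
      ext x
      simp only [Set.mem_preimage, Set.mem_singleton_iff, Set.mem_prod,
        EmbeddingLike.apply_eq_iff_eq, Prod.mk.injEq]
      exact ⟨fun h => ⟨congrArg Prod.fst h, congrArg Prod.snd h⟩, fun h => Prod.ext h.1 h.2⟩
    have hcode : ∀ (v : V) (w : W) (i : Fin m) (j : Fin n),
        colorCode (G □ H) (fun x : V × W => E (cG x.1, cH x.2)) (v, w) (E (i, j))
          = colorCode G cG v i + colorCode H cH w j := by
      intro v w i j
      rw [colorCode, hpre]
      exact setDist_prod hG hH v w (hcG.1 i) (hcH.1 j)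
    rintro ⟨v, w⟩ ⟨v', w'⟩ h
    have key : ∀ (i : Fin m) (j : Fin n),
        colorCode G cG v i + colorCode H cH w j
          = colorCode G cG v' i + colorCode H cH w' j := by
      intro i j
      rw [← hcode, ← hcode, h]
    -- deduce equality of separate codes
    have hfv : colorCode G cG v (cG v) = 0 := colorCode_self cG v
    have hfv' : colorCode G cG v' (cG v') = 0 := colorCode_self cG v'
    have hgw : colorCode H cH w (cH w) = 0 := colorCode_self cH w
    have hgw' : colorCode H cH w' (cH w') = 0 := colorCode_self cH w'
    have e1 := key (cG v) (cH w')
    have e2 := key (cG v') (cH w)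
    rw [hfv, hgw'] at e1
    rw [hfv', hgw] at e2
    -- e1 : g (cH w') = f' (cG v) + 0 ;  e2 : f (cG v') + 0 = g' (cH w)
    have hf0 : colorCode G cG v' (cG v) = 0 ∧ colorCode G cG v (cG v') = 0 := by
      have e3 := key (cG v) (cH w)
      have e4 := key (cG v') (cH w')
      rw [hfv, hgw] at e3
      rw [hgw'] at e4
      omega
    have hfeq : colorCode G cG v = colorCode G cG v' := by
      funext i
      have := key i (cH w)
      have e3 := key (cG v') (cH w)
      rw [hgw] at this e3
      obtain ⟨h1, h2⟩ := hf0
      omega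
    have hgeq : colorCode H cH w = colorCode H cH w' := by
      funext j
      have := key (cG v) j
      have e3 := key (cG v) (cH w')
      rw [hfv] at this e3
      obtain ⟨h1, h2⟩ := hf0
      omega
    have hv := hcG.2.2 hfeq
    have hw := hcH.2.2 hgeq
    rw [Prod.mk.injEq]
    exact ⟨hv, hw⟩
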